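/- Let Z_1, …, Z_n be i.i.d. random variables with values in {1, …, r}, P(Z_1 = a) = p_a > 0, and let p̂_a = #{i : Z_i = a}/n be the empirical frequencies. For every Γ ≥ 0 there exists λ_Γ > 0, depending only on Γ, p_min = min_a p_a, N, and y, such that with probability at least 1 − r·exp(−n·p_min/8) the following holds: p̂_a ≥ p_a/2 for all a, and for every 0 < λ < λ_Γ the unique minimizer g of Φ_{p̂,λ} satisfies min_a y_a·g_a > Γ. -/

import Mathlib

open Matrix Set MeasureTheory ProbabilityTheory Finset

/-- Logistic loss `ℓ(u) = log(1 + e^{−u})`. -/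
noncomputable def logLoss (u : ℝ) : ℝ := Real.log (1 + Real.exp (-u))

/-- Finite-template objective
`Φ_{q,λ}(g) = ∑ₐ q_a·ℓ(y_a·g_a) + (λ/2)·gᵀ N⁻¹ g`. -/
noncomputable def templateObj {r : ℕ} (N : Matrix (Fin r) (Fin r) ℝ)
    (y q : Fin r → ℝ) (lam : ℝ) (g : Fin r → ℝ) : ℝ :=
  ∑ a, q a * logLoss (y a * g a) + (lam / 2) * (g ⬝ᵥ (N⁻¹ *ᵥ g))

lemma logLoss_nonneg (u : ℝ) : 0 ≤ logLoss u :=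
  Real.log_nonneg (le_add_of_nonneg_right (Real.exp_pos _).le)

lemma logLoss_pos (u : ℝ) : 0 < logLoss u :=
  Real.log_pos (lt_add_of_pos_right _ (Real.exp_pos _))

lemma logLoss_anti {u v : ℝ} (h : u ≤ v) : logLoss v ≤ logLoss u :=
  Real.log_le_log (by positivity) (by gcongr)

lemma logLoss_le_exp (u : ℝ) : logLoss u ≤ Real.exp (-u) := by
  have := Real.log_le_sub_one_of_pos (x := 1 + Real.exp (-u)) (by positivity)
  simpa [logLoss] using this

/-- Deterministic part: if all weights lie in `[pmin/2, 1]` then for small enough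
ridge parameter any minimizer has margin larger than `Γ` on every template. -/
lemma det_margin {r : ℕ} (hr : 0 < r) (N : Matrix (Fin r) (Fin r) ℝ) (hN : N.PosDef)
    (y : Fin r → ℝ) (hy : ∀ a, y a = 1 ∨ y a = -1)
    (pmin : ℝ) (hpm : 0 < pmin) (Γ : ℝ) :
    ∃ lamΓ : ℝ, 0 < lamΓ ∧ ∀ q : Fin r → ℝ, (∀ a, pmin / 2 ≤ q a) → (∀ a, q a ≤ 1) →
      ∀ lam : ℝ, 0 < lam → lam < lamΓ → ∀ g : Fin r → ℝ,
        IsMinOn (templateObj N y q lam) univ g → ∀ a, Γ < y a * g a := by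
  set ε : ℝ := pmin / 2 * logLoss Γ with hεdef
  have hε : 0 < ε := by
    have := logLoss_pos Γ; positivity
  set c : ℝ := ε / (4 * r) with hcdef
  have hc : 0 < c := by positivity
  set T : ℝ := max 1 (-Real.log c + 1) with hTdef
  have hT1 : (1:ℝ) ≤ T := le_max_left _ _
  have hTexp : Real.exp (-T) < c := by
    have h1 : -T ≤ Real.log c - 1 := by
      have : -Real.log c + 1 ≤ T := le_max_right _ _
      linarith
    calc Real.exp (-T) ≤ Real.exp (Real.log c - 1) := Real.exp_le_exp.2 h1
      _ < Real.exp (Real.log c) := Real.exp_lt_exp.2 (by linarith)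
      _ = c := Real.exp_log hc
  have hyne : y ≠ 0 := by
    intro h0
    have := congrFun h0 ⟨0, hr⟩
    rcases hy ⟨0, hr⟩ with h | h <;> rw [h] at this <;> norm_num at this
  set C : ℝ := y ⬝ᵥ (N⁻¹ *ᵥ y) with hCdef
  have hC : 0 < C := by
    have := hN.inv.dotProduct_mulVec_pos hyne
    simpa [hCdef] using this
  refine ⟨ε / (2 * T ^ 2 * C), by positivity, ?_⟩
  intro q hq1 hq2 lam hlam hlamlt g hmin
  by_contra hcon
  push_neg at hcon
  obtain ⟨a, ha⟩ := hcon
  have hquad_g : 0 ≤ g ⬝ᵥ (N⁻¹ *ᵥ g) := by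
    have := hN.inv.posSemidef.dotProduct_mulVec_nonneg g
    simpa using this
  have hterms : ∀ b ∈ Finset.univ, 0 ≤ q b * logLoss (y b * g b) := fun b _ =>
    mul_nonneg (le_trans (by positivity) (hq1 b)) (logLoss_nonneg _)
  have hsingle : q a * logLoss (y a * g a) ≤ ∑ b, q b * logLoss (y b * g b) :=
    Finset.single_le_sum hterms (Finset.mem_univ a)
  have hga : ε ≤ q a * logLoss (y a * g a) := by
    have h1 : logLoss Γ ≤ logLoss (y a * g a) := logLoss_anti ha
    calc ε = pmin / 2 * logLoss Γ := rfl
      _ ≤ q a * logLoss (y a * g a) :=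
        mul_le_mul (hq1 a) h1 (logLoss_nonneg _) (le_trans (by positivity) (hq1 a))
  have hlow : ε ≤ templateObj N y q lam g := by
    have : 0 ≤ lam / 2 * (g ⬝ᵥ (N⁻¹ *ᵥ g)) := by positivity
    unfold templateObj; linarith
  have hTy : ∀ b, y b * (T • y) b = T := by
    intro b
    rcases hy b with h | h <;> simp [h]
  have hsum_up : ∑ b, q b * logLoss (y b * (T • y) b) ≤ r * Real.exp (-T) := by
    calc ∑ b, q b * logLoss (y b * (T • y) b) = ∑ b : Fin r, q b * logLoss T := by
          simp_rw [hTy]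
      _ ≤ ∑ _b : Fin r, 1 * Real.exp (-T) := by
          refine Finset.sum_le_sum fun b _ => ?_
          exact mul_le_mul (hq2 b) (logLoss_le_exp T) (logLoss_nonneg _) zero_le_one
      _ = r * Real.exp (-T) := by simp [Finset.sum_const, Finset.card_univ]
  have hquad_Ty : (T • y) ⬝ᵥ (N⁻¹ *ᵥ (T • y)) = T ^ 2 * C := by
    rw [Matrix.mulVec_smul, smul_dotProduct, dotProduct_smul,
      smul_eq_mul, smul_eq_mul]
    ring
  have hquad_lt : lam / 2 * (T ^ 2 * C) < ε / 4 := by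
    have h1 : lam * (T ^ 2 * C) < ε / (2 * T ^ 2 * C) * (T ^ 2 * C) :=
      mul_lt_mul_of_pos_right hlamlt (by positivity)
    have h2 : ε / (2 * T ^ 2 * C) * (T ^ 2 * C) = ε / 2 := by
      field_simp
    rw [h2] at h1; linarith
  have hrexp : (r : ℝ) * Real.exp (-T) < ε / 4 := by
    have : (r : ℝ) * Real.exp (-T) < r * c :=
      mul_lt_mul_of_pos_left hTexp (by exact_mod_cast hr)
    have hrc : (r : ℝ) * c = ε / 4 := by
      rw [hcdef]; field_simp
    linarith
  have hup : templateObj N y q lam (T • y) < ε := by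
    unfold templateObj
    rw [hquad_Ty]
    linarith
  have := hmin (Set.mem_univ (T • y))
  simp only [templateObj, Set.mem_setOf_eq] at this hup hlow
  linarith

/-- Chernoff lower-tail bound for a single template count. -/
lemma chernoff_bad {Ω : Type*} [MeasurableSpace Ω] (μ : Measure Ω) [IsProbabilityMeasure μ]
    (n r : ℕ) (hn : 0 < n) (Z : Fin n → Ω → Fin r) (hZmeas : ∀ i, Measurable (Z i))
    (hindep : iIndepFun Z μ) (a : Fin r) (pa : ℝ) (hpa : 0 < pa)
    (hdist : ∀ i, μ {ω | Z i ω = a} = ENNReal.ofReal pa) :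
    μ {ω | ((Finset.univ.filter (fun i => Z i ω = a)).card : ℝ) ≤ n * pa / 2} ≤
      ENNReal.ofReal (Real.exp (-(n * pa) / 8)) := by
  classical
  set f : Fin r → ℝ := fun z => if z = a then 1 else 0 with hfdef
  have hfmeas : Measurable f := measurable_of_countable f
  set X : Fin n → Ω → ℝ := fun i => f ∘ Z i with hXdef
  have hXmeas : ∀ i, Measurable (X i) := fun i => hfmeas.comp (hZmeas i)
  have hX01 : ∀ i ω, X i ω = 0 ∨ X i ω = 1 := by
    intro i ω
    by_cases h : Z i ω = a <;> simp [hXdef, hfdef, h]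
  have hXnonneg : ∀ i ω, 0 ≤ X i ω := by
    intro i ω; rcases hX01 i ω with h | h <;> rw [h] <;> norm_num
  set S : Ω → ℝ := fun ω => ∑ i, X i ω with hSdef
  have hScard : ∀ ω, ((Finset.univ.filter (fun i => Z i ω = a)).card : ℝ) = S ω := by
    intro ω
    rw [Finset.card_filter]
    push_cast
    simp [hSdef, hXdef, hfdef]
  have hSmeas : Measurable S := Finset.measurable_sum _ fun i _ => hXmeas i
  have hindepX : iIndepFun X μ :=
    hindep.comp (fun _ => f) (fun _ => hfmeas)
  have hpa1 : pa ≤ 1 := by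
    have h := hdist ⟨0, hn⟩
    have : μ {ω | Z ⟨0, hn⟩ ω = a} ≤ 1 := prob_le_one
    rw [h] at this
    exact (ENNReal.ofReal_le_one).1 this
  set t : ℝ := -Real.log 2 with htdef
  have ht : t ≤ 0 := neg_nonpos.2 (Real.log_nonneg one_le_two)
  have hexpt : Real.exp t = 1 / 2 := by
    rw [htdef, Real.exp_neg, Real.exp_log two_pos]; norm_num
  have hmgf : ∀ i, mgf (X i) μ t = 1 - pa / 2 := by
    intro i
    have hset : MeasurableSet {ω | Z i ω = a} := hZmeas i (measurableSet_singleton a)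
    have hXind : X i = Set.indicator {ω | Z i ω = a} (fun _ => (1:ℝ)) := by
      funext ω
      by_cases h : Z i ω = a <;> simp [hXdef, hfdef, h, Set.indicator_apply]
    have hXint : Integrable (X i) μ := by
      rw [hXind]
      exact (integrable_const (1:ℝ)).indicator hset
    have hXintval : ∫ ω, X i ω ∂μ = pa := by
      rw [hXind, MeasureTheory.integral_indicator_const _ hset, measureReal_def, hdist i,
        ENNReal.toReal_ofReal hpa.le, smul_eq_mul, mul_one]
    have heq : (fun ω => Real.exp (t * X i ω)) = fun ω => 1 + (Real.exp t - 1) * X i ω := by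
      funext ω
      rcases hX01 i ω with h | h <;> rw [h] <;> simp
    rw [mgf, heq, integral_add (integrable_const 1) (hXint.const_mul _), integral_const,
      integral_const_mul, hXintval]
    simp [hexpt]
    ring
  have hSexpint : Integrable (fun ω => Real.exp (t * S ω)) μ := by
    refine (integrable_const (1:ℝ)).mono
      ((hSmeas.const_mul t).exp.aestronglyMeasurable) (ae_of_all _ fun ω => ?_)
    rw [Real.norm_eq_abs, Real.abs_exp, norm_one]
    refine Real.exp_le_one_iff.2 (mul_nonpos_of_nonpos_of_nonneg ht ?_)
    exact Finset.sum_nonneg fun i _ => hXnonneg i ω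
  have hchern := measure_le_le_exp_mul_mgf (μ := μ) (X := S) (n * pa / 2) ht hSexpint
  have hmgfS : mgf S μ t = (1 - pa / 2) ^ n := by
    have : S = ∑ i : Fin n, X i := by funext ω; simp [hSdef]
    rw [this, hindepX.mgf_sum hXmeas]
    simp [hmgf]
  rw [hmgfS] at hchern
  have hbound : Real.exp (-t * (n * pa / 2)) * (1 - pa / 2) ^ n ≤ Real.exp (-(n * pa) / 8) := by
    have h1 : (1 - pa / 2 : ℝ) ≤ Real.exp (-(pa / 2)) := by
      have := Real.add_one_le_exp (-(pa / 2)); linarith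
    have h0 : (0:ℝ) ≤ 1 - pa / 2 := by linarith
    have h2 : (1 - pa / 2 : ℝ) ^ n ≤ Real.exp (-(pa / 2)) ^ n := pow_le_pow_left₀ h0 h1 n
    rw [← Real.exp_nat_mul] at h2
    calc Real.exp (-t * (n * pa / 2)) * (1 - pa / 2) ^ n
        ≤ Real.exp (-t * (n * pa / 2)) * Real.exp (n * -(pa / 2)) :=
          mul_le_mul_of_nonneg_left h2 (Real.exp_pos _).le
      _ = Real.exp (Real.log 2 * (n * pa / 2) + n * -(pa / 2)) := by
          rw [← Real.exp_add, htdef]; ring_nf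
      _ ≤ Real.exp (-(n * pa) / 8) := by
          refine Real.exp_le_exp.2 ?_
          have hlog2 : Real.log 2 < 0.6931471808 := Real.log_two_lt_d9
          have hnpa : (0:ℝ) ≤ n * pa := by positivity
          nlinarith
  replace hchern := hchern.trans hbound
  have hfin : μ {ω | S ω ≤ n * pa / 2} ≠ ⊤ := measure_ne_top _ _
  have : μ {ω | S ω ≤ n * pa / 2} ≤ ENNReal.ofReal (Real.exp (-(n * pa) / 8)) := by
    rw [← ENNReal.ofReal_toReal hfin]
    exact ENNReal.ofReal_le_ofReal hchern
  convert this using 2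
  ext ω
  simp [hScard ω]

/-- Ideal margin with empirical template weights: with probability at least
`1 − r·exp(−n·p_min/8)`, all templates are well represented (`p̂_a ≥ p_a/2`) and,
for every ridge parameter `λ ∈ (0, λ_Γ)`, the unique minimizer of `Φ_{p̂,λ}`
has signed margin larger than `Γ` on every template. -/
theorem ideal_margin_empirical_weights
    {Ω : Type*} [MeasurableSpace Ω] (μ : Measure Ω) [IsProbabilityMeasure μ]
    (n r : ℕ) (hn : 0 < n) (hr : 0 < r)
    (Z : Fin n → Ω → Fin r) (hZmeas : ∀ i, Measurable (Z i))
    (hindep : iIndepFun Z μ)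
    (p : Fin r → ℝ) (hp : ∀ a, 0 < p a)
    (hdist : ∀ i a, μ {ω | Z i ω = a} = ENNReal.ofReal (p a))
    (pmin : ℝ) (hpmin : IsLeast {x : ℝ | ∃ a, x = p a} pmin)
    (N : Matrix (Fin r) (Fin r) ℝ) (hN : N.PosDef)
    (y : Fin r → ℝ) (hy : ∀ a, y a = 1 ∨ y a = -1)
    (phat : Fin r → Ω → ℝ)
    (hphat : ∀ a ω, phat a ω = ((univ.filter (fun i => Z i ω = a)).card : ℝ) / n)
    (Γ : ℝ) (hΓ : 0 ≤ Γ) :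
    ∃ lamΓ : ℝ, 0 < lamΓ ∧
      ENNReal.ofReal (1 - r * Real.exp (-(n * pmin) / 8)) ≤
        μ {ω | (∀ a, p a / 2 ≤ phat a ω) ∧
          ∀ lam : ℝ, 0 < lam → lam < lamΓ →
            ∀ g : Fin r → ℝ,
              IsMinOn (templateObj N y (fun a => phat a ω) lam) univ g →
                ∀ a, Γ < y a * g a} := by
  classical
  obtain ⟨a0, ha0⟩ := hpmin.1
  have hpm : 0 < pmin := ha0 ▸ hp a0
  have hpmle : ∀ a, pmin ≤ p a := fun a => hpmin.2 ⟨a, rfl⟩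
  obtain ⟨lamΓ, hlamΓ, hdet⟩ := det_margin hr N hN y hy pmin hpm Γ
  refine ⟨lamΓ, hlamΓ, ?_⟩
  have hq0 : ∀ a ω, 0 ≤ phat a ω := by
    intro a ω; rw [hphat]; positivity
  have hq1 : ∀ a ω, phat a ω ≤ 1 := by
    intro a ω
    rw [hphat]
    rw [div_le_one (by exact_mod_cast hn)]
    have hle : (Finset.univ.filter (fun i => Z i ω = a)).card ≤ n := by
      simpa using Finset.card_filter_le Finset.univ (fun i => Z i ω = a)
    exact_mod_cast hle
  set good : Set Ω := ⋂ a, {ω | p a / 2 ≤ phat a ω} with hgood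
  have hsub : good ⊆ {ω | (∀ a, p a / 2 ≤ phat a ω) ∧
      ∀ lam : ℝ, 0 < lam → lam < lamΓ →
        ∀ g : Fin r → ℝ,
          IsMinOn (templateObj N y (fun a => phat a ω) lam) univ g →
            ∀ a, Γ < y a * g a} := by
    intro ω hω
    have hω' : ∀ a, p a / 2 ≤ phat a ω := fun a => Set.mem_iInter.1 hω a
    refine ⟨hω', fun lam h1 h2 g hg => ?_⟩
    refine hdet (fun a => phat a ω) (fun a => ?_) (fun a => hq1 a ω) lam h1 h2 g hg
    calc pmin / 2 ≤ p a / 2 := by linarith [hpmle a]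
      _ ≤ phat a ω := hω' a
  refine le_trans ?_ (measure_mono hsub)
  -- bad events
  set B : Fin r → Set Ω :=
    fun a => {ω | ((Finset.univ.filter (fun i => Z i ω = a)).card : ℝ) ≤ n * p a / 2} with hB
  have hcover : (Set.univ : Set Ω) ⊆ good ∪ ⋃ a, B a := by
    intro ω _
    by_cases h : ω ∈ good
    · exact Or.inl h
    · right
      rw [hgood, Set.mem_iInter] at h
      push_neg at h
      obtain ⟨a, ha⟩ := h
      refine Set.mem_iUnion.2 ⟨a, ?_⟩
      simp only [hB, Set.mem_setOf_eq]
      rw [Set.mem_setOf_eq, not_le, hphat, div_lt_iff₀ (by exact_mod_cast hn)] at ha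
      nlinarith [ha]
  have hBa : ∀ a, μ (B a) ≤ ENNReal.ofReal (Real.exp (-(n * pmin) / 8)) := by
    intro a
    refine le_trans (chernoff_bad μ n r hn Z hZmeas hindep a (p a) (hp a)
      (fun i => hdist i a)) ?_
    refine ENNReal.ofReal_le_ofReal (Real.exp_le_exp.2 ?_)
    have : (0:ℝ) ≤ n := Nat.cast_nonneg n
    have := hpmle a
    nlinarith
  set e : ℝ := Real.exp (-(n * pmin) / 8) with he
  have hkey : (1 : ENNReal) ≤ μ good + ENNReal.ofReal (r * e) := by
    have h1 : (1 : ENNReal) = μ (Set.univ : Set Ω) := (measure_univ).symm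
    have h2 : μ (Set.univ : Set Ω) ≤ μ (good ∪ ⋃ a, B a) := measure_mono hcover
    have h3 : μ (good ∪ ⋃ a, B a) ≤ μ good + μ (⋃ a, B a) := measure_union_le _ _
    have h4 : μ (⋃ a, B a) ≤ ∑ a, μ (B a) := measure_iUnion_fintype_le μ B
    have h5 : ∑ a, μ (B a) ≤ ∑ _a : Fin r, ENNReal.ofReal e :=
      Finset.sum_le_sum fun a _ => hBa a
    have h6 : ∑ _a : Fin r, ENNReal.ofReal e = ENNReal.ofReal (r * e) := by
      rw [Finset.sum_const, Finset.card_univ, Fintype.card_fin,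
        ENNReal.ofReal_mul (by positivity : (0:ℝ) ≤ (r:ℝ)), ENNReal.ofReal_natCast]
      simp [nsmul_eq_mul]
    calc (1 : ENNReal) = μ (Set.univ : Set Ω) := h1
      _ ≤ μ (good ∪ ⋃ a, B a) := h2
      _ ≤ μ good + μ (⋃ a, B a) := h3
      _ ≤ μ good + ∑ a, μ (B a) := add_le_add_right h4 _
      _ ≤ μ good + ENNReal.ofReal (r * e) := by
          rw [← h6]; exact add_le_add_right h5 _
  have hre : ENNReal.ofReal (1 - r * e) = 1 - ENNReal.ofReal (r * e) := by
    rw [ENNReal.ofReal_sub _ (by positivity), ENNReal.ofReal_one]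
  rw [hre]
  exact tsub_le_iff_right.2 hkey
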